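/- Let p be a prime, H a subset of {0,1,...,p-1}, and let P(x₁,...,x_N) = Π_{h∈H} (x₁ + x₂ + ... + x_N - h) be a polynomial over F_p. If the set (H + pℤ) ∩ {0,1,...,N} has a gap of size at least g+1 (where g is a positive integer), then the set of polynomials {P(x)·Π_{i∈I} x_i : I ⊆ {1,...,N}, |I| ≤ g-1} is linearly independent over F_p, where the polynomials are viewed as functions on {0,1}^N. -/
import Mathlib

open Finset

lemma alt_pow {α : Type*} [DecidableEq α] {R : Type*} [CommRing R] (X : Finset α) :
    (∑ B ∈ X.powerset, ((-1 : R)) ^ B.card) = if X = ∅ then 1 else 0 := by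
  have := Finset.sum_powerset_neg_one_pow_card (x := X)
  have h2 := congrArg (fun z : ℤ => (z : R)) this
  simpa using h2

lemma alt_sum {α : Type*} [DecidableEq α] {R : Type*} [CommRing R] (C D : Finset α) :
    (∑ A ∈ C.powerset, (if D ⊆ A then ((-1 : R)) ^ A.card else 0))
      = if D = C then (-1) ^ C.card else 0 := by
  by_cases hDC : D ⊆ C
  · rw [← Finset.sum_filter]
    have key : ∑ A ∈ C.powerset.filter (fun A => D ⊆ A), ((-1 : R)) ^ A.card
        = ∑ B ∈ (C \ D).powerset, ((-1 : R)) ^ (B.card + D.card) := by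
      refine Finset.sum_bij' (fun A _ => A \ D) (fun B _ => B ∪ D) ?_ ?_ ?_ ?_ ?_
      · intro A hA
        simp only [Finset.mem_filter, Finset.mem_powerset] at hA ⊢
        exact sdiff_subset_sdiff hA.1 le_rfl
      · intro B hB
        simp only [Finset.mem_filter, Finset.mem_powerset] at hB ⊢
        exact ⟨Finset.union_subset (hB.trans sdiff_subset) hDC, Finset.subset_union_right⟩
      · intro A hA
        simp only [Finset.mem_filter, Finset.mem_powerset] at hA
        exact Finset.sdiff_union_of_subset hA.2
      · intro B hB
        simp only [Finset.mem_powerset] at hB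
        show (B ∪ D) \ D = B
        rw [Finset.union_sdiff_right]
        exact Finset.sdiff_eq_self_of_disjoint ((Finset.sdiff_disjoint).mono_left (Finset.le_iff_subset.mpr hB))
      · intro A hA
        simp only [Finset.mem_filter, Finset.mem_powerset] at hA
        rw [Finset.card_sdiff_of_subset hA.2, Nat.sub_add_cancel (Finset.card_le_card hA.2)]
    rw [key]
    simp_rw [pow_add, ← Finset.sum_mul, alt_pow]
    rcases eq_or_ne D C with rfl | hne
    · simp
    · rw [if_neg hne, if_neg (fun h => hne (le_antisymm hDC (Finset.sdiff_eq_empty_iff_subset.mp h))), zero_mul]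
  · rw [Finset.sum_eq_zero, if_neg (by rintro rfl; exact hDC le_rfl)]
    intro A hA
    exact if_neg fun hsub => hDC (hsub.trans (Finset.mem_powerset.mp hA))

/-- A finite set `H ⊆ {0,…,N}` has a gap of size `≥ g`: either its minimum is at least
`g - 1`, or its maximum is at most `N - (g-1)`, or two consecutive elements differ by
at least `g`. -/
def HasGap (H : Finset ℕ) (N g : ℕ) : Prop :=
  (∀ h ∈ H, g - 1 ≤ h) ∨ (∀ h ∈ H, h + (g - 1) ≤ N) ∨
    ∃ a ∈ H, ∃ b ∈ H, a + g ≤ b ∧ ∀ c ∈ H, c ≤ a ∨ b ≤ c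

lemma window (p N g : ℕ) (hg : 1 ≤ g) (H : Finset ℕ)
    (hgap : HasGap ((Finset.range (N + 1)).filter (fun x => x % p ∈ H)) N (g + 1)) :
    ∃ m : ℕ, (∀ d, d ≤ g - 1 → d ≤ N → m + d ≤ N) ∧
      (∀ k, m ≤ k → k ≤ m + (g - 1) → k ≤ N → k % p ∉ H) := by
  have mem_iff : ∀ k, k ∈ (Finset.range (N + 1)).filter (fun x => x % p ∈ H) ↔
      (k ≤ N ∧ k % p ∈ H) := by
    intro k; simp [Finset.mem_filter, Finset.mem_range, Nat.lt_succ_iff]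
  rcases hgap with h1 | h2 | ⟨a, ha, b, hb, hab, hmid⟩
  · refine ⟨0, fun d hd hdN => by omega, fun k hk1 hk2 hk3 hk4 => ?_⟩
    have := h1 k ((mem_iff k).mpr ⟨hk3, hk4⟩)
    omega
  · refine ⟨N + 1 - g, fun d hd hdN => by omega, fun k hk1 hk2 hk3 hk4 => ?_⟩
    have := h2 k ((mem_iff k).mpr ⟨hk3, hk4⟩)
    omega
  · rw [mem_iff] at ha hb
    refine ⟨a + 1, fun d hd hdN => by omega, fun k hk1 hk2 hk3 hk4 => ?_⟩
    have := hmid k ((mem_iff k).mpr ⟨hk3, hk4⟩)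
    omega



/-- Alon–Babai–Suzuki gap lemma: if `(H + pℤ) ∩ {0,…,N}` has a gap of size at least
`g + 1`, then the functions `x ↦ P(x)·∏_{i∈I} x_i` on `{0,1}^N` (identified with
subsets `T` of `{1,…,N}`, so that `∏_{i∈I} x_i` becomes the indicator of `I ⊆ T` and
`x₁ + ⋯ + x_N` becomes `|T|`), for `|I| ≤ g - 1`, are linearly independent over `F_p`. -/
theorem stmt6 (p N g : ℕ) (hp : p.Prime) (hg : 1 ≤ g)
    (H : Finset ℕ) (hH : H ⊆ Finset.range p)
    (hgap : HasGap ((Finset.range (N + 1)).filter (fun x => x % p ∈ H)) N (g + 1)) :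
    LinearIndependent (ZMod p)
      (fun I : {I : Finset (Fin N) // I.card ≤ g - 1} =>
        (fun T : Finset (Fin N) =>
          (if (I : Finset (Fin N)) ⊆ T then (1 : ZMod p) else 0) *
            ∏ h ∈ H, ((T.card : ZMod p) - (h : ZMod p)))) := by
  classical
  haveI : Fact p.Prime := ⟨hp⟩
  obtain ⟨m, hm1, hm2⟩ := window p N g hg H hgap
  rw [Fintype.linearIndependent_iff]
  intro c hc
  by_contra hne
  push_neg at hne
  obtain ⟨i₀, hi₀⟩ := hne
  set s : Finset {I : Finset (Fin N) // I.card ≤ g - 1} :=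
    Finset.univ.filter (fun I => c I ≠ 0) with hs_def
  have hs : s.Nonempty := ⟨i₀, by simp [hs_def, hi₀]⟩
  obtain ⟨I₀, hI₀s, hmax⟩ := s.exists_max_image (fun I => (I.1).card) hs
  have hcI₀ : c I₀ ≠ 0 := (Finset.mem_filter.mp hI₀s).2
  set d := (I₀.1).card with hd_def
  have hd : d ≤ g - 1 := I₀.2
  have hdN : d ≤ N := by
    have := Finset.card_le_card (Finset.subset_univ I₀.1)
    simpa using this
  -- pointwise consequence
  have hpt : ∀ T : Finset (Fin N),
      (∑ i, c i * (if (i : Finset (Fin N)) ⊆ T then (1 : ZMod p) else 0)) *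
        ∏ h ∈ H, ((T.card : ZMod p) - (h : ZMod p)) = 0 := by
    intro T
    have h0 := congrFun hc T
    simp only [Finset.sum_apply, Pi.smul_apply, smul_eq_mul, Pi.zero_apply] at h0
    rw [Finset.sum_mul]
    simp_rw [mul_assoc]
    exact h0
  -- nonvanishing of P on the window
  have hP : ∀ k : ℕ, m ≤ k → k ≤ m + (g - 1) → k ≤ N →
      (∏ h ∈ H, ((k : ZMod p) - (h : ZMod p))) ≠ 0 := by
    intro k hk1 hk2 hk3
    rw [Finset.prod_ne_zero_iff]
    intro h hh hzero
    have heq : (k : ZMod p) = (h : ZMod p) := by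
      have := sub_eq_zero.mp hzero
      exact this
    have hmod : k % p = h % p := (ZMod.natCast_eq_natCast_iff' k h p).mp heq
    have hhp : h < p := Finset.mem_range.mp (hH hh)
    rw [Nat.mod_eq_of_lt hhp] at hmod
    exact hm2 k hk1 hk2 hk3 (hmod ▸ hh)
  -- F vanishes on the window
  have hF : ∀ T : Finset (Fin N), m ≤ T.card → T.card ≤ m + (g - 1) →
      (∑ i, c i * (if (i : Finset (Fin N)) ⊆ T then (1 : ZMod p) else 0)) = 0 := by
    intro T h1 h2
    have hTN : T.card ≤ N := by
      have := Finset.card_le_card (Finset.subset_univ T); simpa using this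
    exact (mul_eq_zero.mp (hpt T)).resolve_right (hP _ h1 h2 hTN)
  -- choose J
  obtain ⟨J, hIJ, hJcard⟩ : ∃ J : Finset (Fin N), I₀.1 ⊆ J ∧ J.card = m + d := by
    refine Finset.exists_superset_card_eq ?_ ?_
    · omega
    · simpa using hm1 d hd hdN
  set I₁ : Finset (Fin N) := J \ I₀.1 with hI₁_def
  have hI₁card : I₁.card = m := by
    rw [hI₁_def, Finset.card_sdiff_of_subset hIJ, hJcard]; omega
  have hdisj : Disjoint I₀.1 I₁ := Finset.disjoint_sdiff
  -- the alternating sum is zero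
  have hS : ∑ A ∈ (I₀.1).powerset,
      ((-1 : ZMod p)) ^ A.card *
        (∑ i, c i * (if (i : Finset (Fin N)) ⊆ I₁ ∪ A then (1 : ZMod p) else 0)) = 0 := by
    apply Finset.sum_eq_zero
    intro A hA
    rw [Finset.mem_powerset] at hA
    have hAcard : (I₁ ∪ A).card = m + A.card := by
      rw [Finset.card_union_of_disjoint ((hdisj.symm).mono_right (Finset.le_iff_subset.mpr hA))]
      omega
    have hAd : A.card ≤ d := Finset.card_le_card hA
    rw [hF (I₁ ∪ A) (by omega) (by omega), mul_zero]
  -- the alternating sum equals ± c I₀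
  have hS2 : ∑ A ∈ (I₀.1).powerset,
      ((-1 : ZMod p)) ^ A.card *
        (∑ i, c i * (if (i : Finset (Fin N)) ⊆ I₁ ∪ A then (1 : ZMod p) else 0))
      = c I₀ * (-1) ^ d := by
    calc ∑ A ∈ (I₀.1).powerset,
          ((-1 : ZMod p)) ^ A.card *
            (∑ i, c i * (if (i : Finset (Fin N)) ⊆ I₁ ∪ A then (1 : ZMod p) else 0))
        = ∑ i, c i * ∑ A ∈ (I₀.1).powerset,
            (if (i : Finset (Fin N)) \ I₁ ⊆ A then ((-1 : ZMod p)) ^ A.card else 0) := by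
          simp_rw [Finset.mul_sum]
          rw [Finset.sum_comm]
          refine Finset.sum_congr rfl fun i _ => ?_
          refine Finset.sum_congr rfl fun A _ => ?_
          have hiff : (i : Finset (Fin N)) ⊆ I₁ ∪ A ↔ (i : Finset (Fin N)) \ I₁ ⊆ A := by
            rw [← Finset.le_iff_subset, ← Finset.le_iff_subset, ← Finset.sup_eq_union]
            exact sdiff_le_iff.symm
          by_cases hcond : (i : Finset (Fin N)) \ I₁ ⊆ A
          · rw [if_pos hcond, if_pos (hiff.mpr hcond)]; ring
          · rw [if_neg hcond, if_neg (fun hh => hcond (hiff.mp hh))]; ring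
      _ = ∑ i, c i * (if (i : Finset (Fin N)) \ I₁ = I₀.1 then ((-1 : ZMod p)) ^ d else 0) := by
          refine Finset.sum_congr rfl fun i _ => ?_
          rw [alt_sum]
      _ = c I₀ * (-1) ^ d := by
          rw [Finset.sum_eq_single I₀]
          · rw [if_pos (Finset.sdiff_eq_self_of_disjoint hdisj)]
          · intro i _ hne
            by_cases hcond : (i : Finset (Fin N)) \ I₁ = I₀.1
            · have hsub : I₀.1 ⊆ (i : Finset (Fin N)) := hcond ▸ Finset.sdiff_subset
              have hci : c i = 0 := by
                by_contra hci
                have his : i ∈ s := Finset.mem_filter.mpr ⟨Finset.mem_univ _, hci⟩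
                have hle := hmax i his
                exact hne (Subtype.ext (Finset.eq_of_subset_of_card_le hsub hle).symm)
              rw [hci, zero_mul]
            · rw [if_neg hcond, mul_zero]
          · intro h; exact absurd (Finset.mem_univ I₀) h
  rw [hS] at hS2
  have hu : (-1 : ZMod p) ^ d ≠ 0 := pow_ne_zero _ (neg_ne_zero.mpr one_ne_zero)
  rcases mul_eq_zero.mp hS2.symm with h | h
  · exact hcI₀ h
  · exact hu h
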